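/- For every Eulerian poset P = [0̂,1̂] of rank d, the polynomial B(P;u,v) satisfies the closed formula B(P;u,v) = Σ_{0̂ ≤ x ≤ 1̂} G([x,1̂]*, u⁻¹v) · (-u)^{rk 1̂ − rk x} · G([0̂,x], uv). -/
import Mathlib


open Polynomial
open scoped Classical

noncomputable section

/-- Truncation operator `τ_{<d/2}`: keep only terms of degree `i` with `2*i < d`. -/
def truncHalf (d : ℕ) (p : Polynomial ℤ) : Polynomial ℤ :=
  ∑ i ∈ Finset.range ((d + 1) / 2), Polynomial.C (p.coeff i) * Polynomial.X ^ i

variable {α : Type*} [Fintype α] [PartialOrder α] [BoundedOrder α]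

/-- `rk` is the rank function of a (finite, bounded) graded Eulerian poset. -/
structure EulerianRank (rk : α → ℕ) : Prop where
  rk_bot : rk ⊥ = 0
  rk_covby : ∀ a b : α, a ⋖ b → rk b = rk a + 1
  eulerian : ∀ a b : α, a < b →
    (Finset.univ.filter fun z => a ≤ z ∧ z ≤ b ∧ Even (rk z)).card =
    (Finset.univ.filter fun z => a ≤ z ∧ z ≤ b ∧ ¬ Even (rk z)).card

/-- `G a b` and `H a b` satisfy Stanley's defining recursion for the `G`- and
`H`-polynomials of each interval `[a,b]` of the poset. -/
structure IsGH (rk : α → ℕ) (G H : α → α → Polynomial ℤ) : Prop where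
  G_refl : ∀ a : α, G a a = 1
  H_eq : ∀ a b : α, a < b →
    H a b = ∑ x ∈ Finset.univ.filter (fun x => a < x ∧ x ≤ b),
      (Polynomial.X - 1) ^ (rk x - rk a - 1) * G x b
  G_eq : ∀ a b : α, a < b →
    G a b = truncHalf (rk b - rk a) ((1 - Polynomial.X) * H a b)

/-- `G a b` and `H a b` satisfy Stanley's defining recursion for the `G`- and
`H`-polynomials of the *dual* interval `[a,b]*`. -/
structure IsGHDual (rk : α → ℕ) (G H : α → α → Polynomial ℤ) : Prop where
  G_refl : ∀ a : α, G a a = 1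
  H_eq : ∀ a b : α, a < b →
    H a b = ∑ x ∈ Finset.univ.filter (fun x => a ≤ x ∧ x < b),
      (Polynomial.X - 1) ^ (rk b - rk x - 1) * G a x
  G_eq : ∀ a b : α, a < b →
    G a b = truncHalf (rk b - rk a) ((1 - Polynomial.X) * H a b)

end
/-- Evaluation of an integer polynomial at an element of a field. -/
noncomputable def evP {F : Type*} [Field F] (t : F) (p : Polynomial ℤ) : F :=
  Polynomial.eval₂ (Int.castRingHom F) t p

open scoped Classical in
/-- `B` satisfies the defining recursion of the `B`-polynomials of Batyrev–Borisov
(evaluated at the pair `(u,v)` of elements of a field `F`):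
`B(P;u,v) = 1` in rank `0`, and
`∑_{a ≤ x ≤ b} B([a,x];u,v) u^{d-ρ(x)} G([x,b], u⁻¹v) = G([a,b], uv)`. -/
structure IsB {α : Type*} [Fintype α] [PartialOrder α] {F : Type*} [Field F]
    (rk : α → ℕ) (G : α → α → Polynomial ℤ) (u v : F) (B : α → α → F) : Prop where
  B_refl : ∀ a : α, B a a = 1
  B_rec : ∀ a b : α, a ≤ b →
    ∑ x ∈ Finset.univ.filter (fun x => a ≤ x ∧ x ≤ b),
        B a x * u ^ (rk b - rk x) * evP (v / u) (G x b)
      = evP (u * v) (G a b)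

namespace Stmt3Aux

open Polynomial Finset
open scoped Classical

variable {α : Type*} [Fintype α] [PartialOrder α]

noncomputable def S (a b : α) : Finset α := Finset.univ.filter (fun x => a ≤ x ∧ x ≤ b)

lemma mem_S {a b x : α} : x ∈ S a b ↔ a ≤ x ∧ x ≤ b := by simp [S]

lemma S_self (a : α) : S a a = {a} := by
  ext x
  simp only [mem_S, Finset.mem_singleton]
  constructor
  · rintro ⟨h1, h2⟩; exact le_antisymm h2 h1
  · rintro rfl; exact ⟨le_rfl, le_rfl⟩

lemma left_mem_S {a b : α} (h : a ≤ b) : a ∈ S a b := mem_S.2 ⟨le_rfl, h⟩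
lemma right_mem_S {a b : α} (h : a ≤ b) : b ∈ S a b := mem_S.2 ⟨h, le_rfl⟩

lemma truncHalf_coeff (d : ℕ) (p : Polynomial ℤ) (i : ℕ) :
    (truncHalf d p).coeff i = if 2 * i < d then p.coeff i else 0 := by
  unfold truncHalf
  rw [Polynomial.finset_sum_coeff]
  simp only [Polynomial.coeff_C_mul, Polynomial.coeff_X_pow, mul_ite, mul_one, mul_zero]
  rw [Finset.sum_ite_eq (Finset.range ((d + 1) / 2)) i (fun j => p.coeff j)]
  by_cases h : 2 * i < d
  · rw [if_pos h, if_pos (by simp only [Finset.mem_range]; omega)]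
  · rw [if_neg h, if_neg (by simp only [Finset.mem_range]; omega)]

section Rank

variable [BoundedOrder α] {rk : α → ℕ} {G H Gd Hd : α → α → Polynomial ℤ}

lemma rk_lt (hE : EulerianRank rk) {a b : α} (hab : a < b) : rk a < rk b := by
  letI : LocallyFiniteOrder α := Fintype.toLocallyFiniteOrder
  have wf : WellFounded ((· > ·) : α → α → Prop) := Finite.to_wellFoundedGT.wf
  have main : ∀ c : α, ∀ b, c < b → rk c < rk b := by
    refine fun c => wf.induction (C := fun a => ∀ b, a < b → rk a < rk b) c ?_
    intro a IH b hab
    obtain ⟨c, hac, hcb⟩ := exists_covBy_le_of_lt hab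
    have hc := hE.rk_covby a c hac
    rcases eq_or_lt_of_le hcb with rfl | hlt
    · omega
    · have := IH c hac.lt b hlt
      omega
  exact main a b hab

lemma rk_le (hE : EulerianRank rk) {a b : α} (hab : a ≤ b) : rk a ≤ rk b := by
  rcases eq_or_lt_of_le hab with rfl | h
  · exact le_rfl
  · exact (rk_lt hE h).le

lemma G_hi (hGH : IsGH rk G H) {a b : α} (hab : a ≤ b) {i : ℕ}
    (hi : rk b - rk a ≤ 2 * i) (hne : ¬(a = b ∧ i = 0)) : (G a b).coeff i = 0 := by
  rcases eq_or_lt_of_le hab with rfl | h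
  · have hi0 : i ≠ 0 := fun h0 => hne ⟨rfl, h0⟩
    simp [hGH.G_refl a, Polynomial.coeff_one, hi0]
  · rw [hGH.G_eq a b h, truncHalf_coeff, if_neg (by omega)]

lemma Gd_hi (hGHd : IsGHDual rk Gd Hd) {a b : α} (hab : a ≤ b) {i : ℕ}
    (hi : rk b - rk a ≤ 2 * i) (hne : ¬(a = b ∧ i = 0)) : (Gd a b).coeff i = 0 := by
  rcases eq_or_lt_of_le hab with rfl | h
  · have hi0 : i ≠ 0 := fun h0 => hne ⟨rfl, h0⟩
    simp [hGHd.G_refl a, Polynomial.coeff_one, hi0]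
  · rw [hGHd.G_eq a b h, truncHalf_coeff, if_neg (by omega)]

noncomputable def Fp (rk : α → ℕ) (G : α → α → Polynomial ℤ) (a b : α) : Polynomial ℤ :=
  ∑ x ∈ S a b, (Polynomial.X - 1) ^ (rk x - rk a) * G x b

noncomputable def Fd (rk : α → ℕ) (Gd : α → α → Polynomial ℤ) (a b : α) : Polynomial ℤ :=
  ∑ x ∈ S a b, (Polynomial.X - 1) ^ (rk b - rk x) * Gd a x

lemma Fp_lo (hE : EulerianRank rk) (hGH : IsGH rk G H) {a b : α} (hab : a ≤ b)
    {i : ℕ} (hi : 2 * i < rk b - rk a) : (Fp rk G a b).coeff i = 0 := by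
  have h : a < b := by
    rcases eq_or_lt_of_le hab with rfl | h
    · omega
    · exact h
  set T := Finset.univ.filter (fun x : α => a < x ∧ x ≤ b) with hT
  have hS : S a b = insert a T := by
    ext x
    simp only [mem_S, hT, Finset.mem_insert, Finset.mem_filter, Finset.mem_univ, true_and]
    constructor
    · rintro ⟨h1, h2⟩
      rcases eq_or_lt_of_le h1 with rfl | h'
      · exact Or.inl rfl
      · exact Or.inr ⟨h', h2⟩
    · rintro (rfl | ⟨h1, h2⟩)
      · exact ⟨le_rfl, h.le⟩
      · exact ⟨h1.le, h2⟩
  have haT : a ∉ T := by simp [hT]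
  have hFp : Fp rk G a b = G a b + ∑ x ∈ T, (Polynomial.X - 1) ^ (rk x - rk a) * G x b := by
    rw [Fp, hS, Finset.sum_insert haT, Nat.sub_self, pow_zero, one_mul]
  have hH : (1 - Polynomial.X) * H a b
      = -∑ x ∈ T, (Polynomial.X - 1) ^ (rk x - rk a) * G x b := by
    rw [hGH.H_eq a b h, Finset.mul_sum, ← Finset.sum_neg_distrib]
    refine Finset.sum_congr rfl fun x hx => ?_
    simp only [hT, Finset.mem_filter, Finset.mem_univ, true_and] at hx
    have h1 : rk a < rk x := rk_lt hE hx.1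
    set m := rk x - rk a - 1 with hm
    rw [show rk x - rk a = m + 1 by omega, pow_succ]
    ring
  have hG := congrArg (fun p => p.coeff i) (hGH.G_eq a b h)
  simp only [truncHalf_coeff, if_pos hi, hH, Polynomial.coeff_neg] at hG
  rw [hFp, Polynomial.coeff_add, hG]
  exact neg_add_cancel _

lemma Fd_lo (hE : EulerianRank rk) (hGHd : IsGHDual rk Gd Hd) {a b : α} (hab : a ≤ b)
    {i : ℕ} (hi : 2 * i < rk b - rk a) : (Fd rk Gd a b).coeff i = 0 := by
  have h : a < b := by
    rcases eq_or_lt_of_le hab with rfl | h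
    · omega
    · exact h
  set T := Finset.univ.filter (fun x : α => a ≤ x ∧ x < b) with hT
  have hS : S a b = insert b T := by
    ext x
    simp only [mem_S, hT, Finset.mem_insert, Finset.mem_filter, Finset.mem_univ, true_and]
    constructor
    · rintro ⟨h1, h2⟩
      rcases eq_or_lt_of_le h2 with rfl | h'
      · exact Or.inl rfl
      · exact Or.inr ⟨h1, h'⟩
    · rintro (rfl | ⟨h1, h2⟩)
      · exact ⟨h.le, le_rfl⟩
      · exact ⟨h1, h2.le⟩
  have hbT : b ∉ T := by simp [hT]
  have hFd : Fd rk Gd a b = Gd a b + ∑ x ∈ T, (Polynomial.X - 1) ^ (rk b - rk x) * Gd a x := by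
    rw [Fd, hS, Finset.sum_insert hbT, Nat.sub_self, pow_zero, one_mul]
  have hH : (1 - Polynomial.X) * Hd a b
      = -∑ x ∈ T, (Polynomial.X - 1) ^ (rk b - rk x) * Gd a x := by
    rw [hGHd.H_eq a b h, Finset.mul_sum, ← Finset.sum_neg_distrib]
    refine Finset.sum_congr rfl fun x hx => ?_
    simp only [hT, Finset.mem_filter, Finset.mem_univ, true_and] at hx
    have h1 : rk x < rk b := rk_lt hE hx.2
    set m := rk b - rk x - 1 with hm
    rw [show rk b - rk x = m + 1 by omega, pow_succ]
    ring
  have hG := congrArg (fun p => p.coeff i) (hGHd.G_eq a b h)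
  simp only [truncHalf_coeff, if_pos hi, hH, Polynomial.coeff_neg] at hG
  rw [hFd, Polynomial.coeff_add, hG]
  exact neg_add_cancel _

lemma sum_neg_one_pow (hE : EulerianRank rk) {z x : α} (h : z < x) :
    ∑ y ∈ S z x, (-1 : Polynomial ℤ) ^ (rk y) = 0 := by
  rw [← Finset.sum_filter_add_sum_filter_not (S z x) (fun y => Even (rk y))]
  have h1 : ∑ y ∈ (S z x).filter (fun y => Even (rk y)), (-1 : Polynomial ℤ) ^ (rk y)
      = (((S z x).filter (fun y => Even (rk y))).card : Polynomial ℤ) := by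
    rw [Finset.sum_congr rfl (fun y hy => Even.neg_one_pow (Finset.mem_filter.1 hy).2)]
    simp
  have h2 : ∑ y ∈ (S z x).filter (fun y => ¬ Even (rk y)), (-1 : Polynomial ℤ) ^ (rk y)
      = -(((S z x).filter (fun y => ¬ Even (rk y))).card : Polynomial ℤ) := by
    rw [Finset.sum_congr rfl
      (fun y hy => Odd.neg_one_pow (Nat.not_even_iff_odd.1 (Finset.mem_filter.1 hy).2))]
    simp
  have e1 : (S z x).filter (fun y => Even (rk y))
      = Finset.univ.filter (fun y => z ≤ y ∧ y ≤ x ∧ Even (rk y)) := by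
    ext y; simp [S, Finset.mem_filter, and_assoc]
  have e2 : (S z x).filter (fun y => ¬ Even (rk y))
      = Finset.univ.filter (fun y => z ≤ y ∧ y ≤ x ∧ ¬ Even (rk y)) := by
    ext y; simp [S, Finset.mem_filter, and_assoc]
  rw [h1, h2, e1, e2, hE.eulerian z x h]
  exact add_neg_cancel _

lemma delta (hE : EulerianRank rk) {z x : α} (hzx : z ≤ x) :
    ∑ y ∈ S z x, (-1 : Polynomial ℤ) ^ (rk y - rk z) = if z = x then 1 else 0 := by
  rcases eq_or_lt_of_le hzx with rfl | h
  · rw [if_pos rfl, S_self]; simp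
  · rw [if_neg h.ne]
    have key : (∑ y ∈ S z x, (-1 : Polynomial ℤ) ^ (rk y - rk z)) * (-1) ^ (rk z)
        = ∑ y ∈ S z x, (-1 : Polynomial ℤ) ^ (rk y) := by
      rw [Finset.sum_mul]
      refine Finset.sum_congr rfl fun y hy => ?_
      have := rk_le hE (mem_S.1 hy).1
      rw [← pow_add]
      congr 1
      omega
    have h0 := sum_neg_one_pow hE h
    have h2 : ((-1 : Polynomial ℤ) ^ (rk z)) * ((-1) ^ (rk z)) = 1 := by
      rw [← pow_add]; exact Even.neg_one_pow ⟨rk z, rfl⟩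
    calc (∑ y ∈ S z x, (-1 : Polynomial ℤ) ^ (rk y - rk z))
        = (∑ y ∈ S z x, (-1 : Polynomial ℤ) ^ (rk y - rk z)) * ((-1) ^ (rk z) * (-1) ^ (rk z)) := by
          rw [h2, mul_one]
      _ = (∑ y ∈ S z x, (-1 : Polynomial ℤ) ^ (rk y)) * (-1) ^ (rk z) := by
          rw [← mul_assoc, key]
      _ = 0 := by rw [h0, zero_mul]

lemma key_id (hE : EulerianRank rk) {a b : α} (hab : a ≤ b) :
    ∑ y ∈ S a b, (-1 : Polynomial ℤ) ^ (rk y - rk a) * (Fd rk Gd a y * Fp rk G y b)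
    = ∑ z ∈ S a b, (-1 : Polynomial ℤ) ^ (rk z - rk a) * (Gd a z * G z b) := by
  have step1 : ∀ y ∈ S a b,
      (-1 : Polynomial ℤ) ^ (rk y - rk a) * (Fd rk Gd a y * Fp rk G y b)
      = ∑ z ∈ S a y, ∑ x ∈ S y b,
          (-1 : Polynomial ℤ) ^ (rk y - rk a) *
            ((Polynomial.X - 1) ^ (rk y - rk z) * Gd a z *
              ((Polynomial.X - 1) ^ (rk x - rk y) * G x b)) := by
    intro y hy
    unfold Fd Fp
    rw [Finset.sum_mul_sum, Finset.mul_sum]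
    refine Finset.sum_congr rfl fun z hz => ?_
    rw [Finset.mul_sum]
  rw [Finset.sum_congr rfl step1]
  rw [Finset.sum_comm' (s := S a b) (t := fun y => S a y) (t' := S a b) (s' := fun z => S z b)
    (fun y z => by
      simp only [mem_S]
      constructor
      · rintro ⟨⟨h1, h2⟩, h3, h4⟩
        exact ⟨⟨h4, h2⟩, h3, h4.trans h2⟩
      · rintro ⟨⟨h1, h2⟩, h3, h4⟩
        exact ⟨⟨h3.trans h1, h2⟩, h3, h1⟩)]
  refine Finset.sum_congr rfl fun z hz => ?_
  obtain ⟨haz, hzb⟩ := mem_S.1 hz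
  rw [Finset.sum_comm' (s := S z b) (t := fun y => S y b) (t' := S z b) (s' := fun x => S z x)
    (fun y x => by
      simp only [mem_S]
      constructor
      · rintro ⟨⟨h1, h2⟩, h3, h4⟩
        exact ⟨⟨h1, h3⟩, h1.trans h3, h4⟩
      · rintro ⟨⟨h1, h2⟩, h3, h4⟩
        exact ⟨⟨h1, h2.trans h4⟩, h2, h4⟩)]
  have inner : ∀ x ∈ S z b,
      (∑ y ∈ S z x,
        (-1 : Polynomial ℤ) ^ (rk y - rk a) *
          ((Polynomial.X - 1) ^ (rk y - rk z) * Gd a z *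
            ((Polynomial.X - 1) ^ (rk x - rk y) * G x b)))
      = ((-1 : Polynomial ℤ) ^ (rk z - rk a) *
          ((Polynomial.X - 1) ^ (rk x - rk z) * (Gd a z * G x b)))
        * (if z = x then 1 else 0) := by
    intro x hx
    obtain ⟨hzx, hxb⟩ := mem_S.1 hx
    have e0 : ∀ y ∈ S z x,
        (-1 : Polynomial ℤ) ^ (rk y - rk a) *
          ((Polynomial.X - 1) ^ (rk y - rk z) * Gd a z *
            ((Polynomial.X - 1) ^ (rk x - rk y) * G x b))
        = ((-1 : Polynomial ℤ) ^ (rk z - rk a) *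
            ((Polynomial.X - 1) ^ (rk x - rk z) * (Gd a z * G x b)))
          * (-1 : Polynomial ℤ) ^ (rk y - rk z) := by
      intro y hy
      obtain ⟨hzy, hyx⟩ := mem_S.1 hy
      have r1 := rk_le hE haz
      have r2 := rk_le hE hzy
      have r3 := rk_le hE hyx
      have e1 : rk y - rk a = (rk z - rk a) + (rk y - rk z) := by omega
      have e2 : rk x - rk z = (rk y - rk z) + (rk x - rk y) := by omega
      rw [e1, pow_add, e2, pow_add]
      ring
    rw [Finset.sum_congr rfl e0, ← Finset.mul_sum, delta hE hzx]
  rw [Finset.sum_congr rfl inner]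
  simp only [mul_ite, mul_one, mul_zero]
  rw [Finset.sum_ite_eq (S z b) z]
  rw [if_pos (left_mem_S hzb), Nat.sub_self, pow_zero, one_mul]

lemma ortho (hE : EulerianRank rk) (hGH : IsGH rk G H) (hGHd : IsGHDual rk Gd Hd)
    {a b : α} (hab : a < b) :
    ∑ x ∈ S a b, (-1 : Polynomial ℤ) ^ (rk x - rk a) * (Gd a x * G x b) = 0 := by
  have hC : ∀ k : ℕ, ((-1 : Polynomial ℤ)) ^ k = Polynomial.C ((-1 : ℤ) ^ k) := by
    intro k; rw [map_pow, map_neg, map_one]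
  apply Polynomial.ext
  intro i
  rw [Polynomial.coeff_zero]
  by_cases hi : 2 * i < rk b - rk a
  · rw [← key_id hE hab.le, Polynomial.finset_sum_coeff]
    refine Finset.sum_eq_zero fun y hy => ?_
    obtain ⟨hay, hyb⟩ := mem_S.1 hy
    have r1 := rk_le hE hay
    have r2 := rk_le hE hyb
    rw [hC, Polynomial.coeff_C_mul, Polynomial.coeff_mul]
    rw [Finset.sum_eq_zero, mul_zero]
    intro p hp
    have hsum : p.1 + p.2 = i := Finset.HasAntidiagonal.mem_antidiagonal.1 hp
    by_cases hp1 : 2 * p.1 < rk y - rk a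
    · rw [Fd_lo hE hGHd hay hp1, zero_mul]
    · rw [Fp_lo hE hGH hyb (by omega), mul_zero]
  · rw [Polynomial.finset_sum_coeff]
    refine Finset.sum_eq_zero fun x hx => ?_
    obtain ⟨hax, hxb⟩ := mem_S.1 hx
    have r1 := rk_le hE hax
    have r2 := rk_le hE hxb
    rw [hC, Polynomial.coeff_C_mul, Polynomial.coeff_mul]
    rw [Finset.sum_eq_zero, mul_zero]
    intro p hp
    have hsum : p.1 + p.2 = i := Finset.HasAntidiagonal.mem_antidiagonal.1 hp
    by_cases hp1 : 2 * p.1 < rk x - rk a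
    · rw [G_hi hGH hxb (by omega) (by rintro ⟨rfl, h0⟩; omega), mul_zero]
    · by_cases hax0 : a = x ∧ p.1 = 0
      · obtain ⟨rfl, h0⟩ := hax0
        rw [G_hi hGH hxb (by omega) (by rintro ⟨rfl, h0'⟩; exact absurd rfl hab.ne), mul_zero]
      · rw [Gd_hi hGHd hax (by omega) hax0, zero_mul]

end Rank

section FieldPart

variable [BoundedOrder α] {rk : α → ℕ} {G H Gd Hd : α → α → Polynomial ℤ}
variable {F : Type*} [Field F]

lemma evP_one (t : F) : evP t (1 : Polynomial ℤ) = 1 := Polynomial.eval₂_one _ _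

lemma evP_mul (t : F) (p q : Polynomial ℤ) : evP t (p * q) = evP t p * evP t q :=
  Polynomial.eval₂_mul _ _

lemma evP_sum (t : F) {γ : Type*} (s : Finset γ) (f : γ → Polynomial ℤ) :
    evP t (∑ x ∈ s, f x) = ∑ x ∈ s, evP t (f x) :=
  Polynomial.eval₂_finset_sum _ _ _ _

lemma evP_zero (t : F) : evP t (0 : Polynomial ℤ) = 0 := Polynomial.eval₂_zero _ _

lemma evP_neg_one_pow (t : F) (k : ℕ) : evP t ((-1 : Polynomial ℤ) ^ k) = (-1 : F) ^ k := by
  rw [evP, Polynomial.eval₂_pow, Polynomial.eval₂_neg, Polynomial.eval₂_one]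

lemma B'_rec (hE : EulerianRank rk) (hGH : IsGH rk G H) (hGHd : IsGHDual rk Gd Hd)
    (u v : F) {a b : α} (hab : a ≤ b) :
    ∑ x ∈ S a b,
        (∑ z ∈ S a x, evP (v / u) (Gd z x) * (-u) ^ (rk x - rk z) * evP (u * v) (G a z))
          * u ^ (rk b - rk x) * evP (v / u) (G x b)
    = evP (u * v) (G a b) := by
  have expand : ∀ x ∈ S a b,
      (∑ z ∈ S a x, evP (v / u) (Gd z x) * (-u) ^ (rk x - rk z) * evP (u * v) (G a z))
          * u ^ (rk b - rk x) * evP (v / u) (G x b)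
      = ∑ z ∈ S a x, evP (v / u) (Gd z x) * (-u) ^ (rk x - rk z) * evP (u * v) (G a z)
          * u ^ (rk b - rk x) * evP (v / u) (G x b) := by
    intro x hx
    rw [Finset.sum_mul, Finset.sum_mul]
  rw [Finset.sum_congr rfl expand]
  rw [Finset.sum_comm' (s := S a b) (t := fun x => S a x) (t' := S a b) (s' := fun z => S z b)
    (fun x z => by
      simp only [mem_S]
      constructor
      · rintro ⟨⟨h1, h2⟩, h3, h4⟩
        exact ⟨⟨h4, h2⟩, h3, h4.trans h2⟩
      · rintro ⟨⟨h1, h2⟩, h3, h4⟩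
        exact ⟨⟨h3.trans h1, h2⟩, h3, h1⟩)]
  have hin : ∀ z ∈ S a b,
      (∑ x ∈ S z b, (-1 : F) ^ (rk x - rk z) * (evP (v / u) (Gd z x) * evP (v / u) (G x b)))
      = if z = b then 1 else 0 := by
    intro z hz
    obtain ⟨haz, hzb⟩ := mem_S.1 hz
    rcases eq_or_lt_of_le hzb with rfl | hlt
    · rw [if_pos rfl, S_self, Finset.sum_singleton, Nat.sub_self, pow_zero, one_mul,
        hGHd.G_refl, hGH.G_refl, evP_one, mul_one]
    · rw [if_neg hlt.ne]
      have e : (∑ x ∈ S z b, (-1 : F) ^ (rk x - rk z) * (evP (v / u) (Gd z x) * evP (v / u) (G x b)))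
          = evP (v / u) (∑ x ∈ S z b,
              (-1 : Polynomial ℤ) ^ (rk x - rk z) * (Gd z x * G x b)) := by
        rw [evP_sum]
        refine Finset.sum_congr rfl fun x hx => ?_
        rw [evP_mul, evP_mul, evP_neg_one_pow]
      rw [e, ortho hE hGH hGHd hlt, evP_zero]
  have hcol : ∀ z ∈ S a b,
      (∑ x ∈ S z b,
        evP (v / u) (Gd z x) * (-u) ^ (rk x - rk z) * evP (u * v) (G a z)
          * u ^ (rk b - rk x) * evP (v / u) (G x b))
      = (evP (u * v) (G a z) * u ^ (rk b - rk z)) * (if z = b then 1 else 0) := by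
    intro z hz
    obtain ⟨haz, hzb⟩ := mem_S.1 hz
    have rearr : ∀ x ∈ S z b,
        evP (v / u) (Gd z x) * (-u) ^ (rk x - rk z) * evP (u * v) (G a z)
            * u ^ (rk b - rk x) * evP (v / u) (G x b)
        = (evP (u * v) (G a z) * u ^ (rk b - rk z)) *
            ((-1 : F) ^ (rk x - rk z) * (evP (v / u) (Gd z x) * evP (v / u) (G x b))) := by
      intro x hx
      obtain ⟨hzx, hxb⟩ := mem_S.1 hx
      have r1 := rk_le hE hzx
      have r2 := rk_le hE hxb
      have e1 : rk b - rk z = (rk x - rk z) + (rk b - rk x) := by omega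
      rw [e1, pow_add, neg_pow]
      ring
    rw [Finset.sum_congr rfl rearr, ← Finset.mul_sum, hin z hz]
  rw [Finset.sum_congr rfl hcol]
  simp only [mul_ite, mul_one, mul_zero]
  rw [Finset.sum_ite_eq' (S a b) b, if_pos (right_mem_S hab), Nat.sub_self, pow_zero, mul_one]

lemma B_eq (hE : EulerianRank rk) (hGH : IsGH rk G H) (hGHd : IsGHDual rk Gd Hd)
    (u v : F) (B : α → α → F) (hB : IsB rk G u v B) :
    ∀ (n : ℕ) (a b : α), a ≤ b → rk b - rk a ≤ n →
    B a b = ∑ z ∈ S a b, evP (v / u) (Gd z b) * (-u) ^ (rk b - rk z) * evP (u * v) (G a z) := by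
  intro n
  induction n with
  | zero =>
    intro a b hab hn
    have hEq : a = b := by
      rcases eq_or_lt_of_le hab with rfl | h
      · rfl
      · exact absurd (rk_lt hE h) (by omega)
    subst hEq
    rw [hB.B_refl a, S_self, Finset.sum_singleton, hGHd.G_refl, hGH.G_refl, Nat.sub_self,
      pow_zero, evP_one, evP_one]
    ring
  | succ n IH =>
    intro a b hab hn
    have h1 : ∑ x ∈ S a b, B a x * u ^ (rk b - rk x) * evP (v / u) (G x b)
        = evP (u * v) (G a b) := hB.B_rec a b hab
    have h2 := B'_rec hE hGH hGHd u v hab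
    rw [← Finset.sum_erase_add (S a b) _ (right_mem_S hab)] at h1 h2
    have herase : ∑ x ∈ (S a b).erase b, B a x * u ^ (rk b - rk x) * evP (v / u) (G x b)
        = ∑ x ∈ (S a b).erase b,
            (∑ z ∈ S a x, evP (v / u) (Gd z x) * (-u) ^ (rk x - rk z) * evP (u * v) (G a z))
              * u ^ (rk b - rk x) * evP (v / u) (G x b) := by
      refine Finset.sum_congr rfl fun x hx => ?_
      obtain ⟨hne, hxS⟩ := Finset.mem_erase.1 hx
      obtain ⟨hax, hxb⟩ := mem_S.1 hxS
      have hxb' : x < b := lt_of_le_of_ne hxb hne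
      have l1 := rk_lt hE hxb'
      have l2 := rk_le hE hax
      rw [IH a x hax (by omega)]
    rw [herase] at h1
    have hfin := add_left_cancel (h1.trans h2.symm)
    rw [Nat.sub_self, pow_zero, mul_one, hGH.G_refl, evP_one, mul_one, mul_one, mul_one] at hfin
    exact hfin

end FieldPart

end Stmt3Aux

/-- For every Eulerian poset `P = [⊥,⊤]`, the polynomial `B(P;u,v)`
satisfies `B(P;u,v) = ∑_{⊥ ≤ x ≤ ⊤} G([x,⊤]*, u⁻¹v) (-u)^{rk ⊤ - rk x} G([⊥,x], uv)`. -/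
theorem stmt3 {α : Type*} [Fintype α] [PartialOrder α] [BoundedOrder α]
    (rk : α → ℕ) (hE : EulerianRank rk)
    (G H Gd Hd : α → α → Polynomial ℤ)
    (hGH : IsGH rk G H) (hGHd : IsGHDual rk Gd Hd)
    {F : Type*} [Field F] (u v : F) (hu : u ≠ 0)
    (B : α → α → F) (hB : IsB rk G u v B) :
    B ⊥ ⊤ = ∑ x : α, evP (v / u) (Gd x ⊤) * (-u) ^ (rk (⊤ : α) - rk x)
      * evP (u * v) (G ⊥ x) := by
  have main := Stmt3Aux.B_eq hE hGH hGHd u v B hB (rk (⊤ : α)) ⊥ ⊤ bot_le (Nat.sub_le _ _)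
  rw [main]
  refine Finset.sum_congr ?_ (fun x _ => rfl)
  ext x
  simp [Stmt3Aux.mem_S]
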